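/- (Proposition 2.) Let p ∈ (0,1). Define φ(x) = Û(x, θ_L) − p Û(x, θ_H) − (1−p) g(x) and ψ(x) = U(x, θ_L) − p U(x, θ_H) − (1−p) g(x), so that ψ(x) = φ(x) − (1 − η(x))(ℓ(θ_L) − p ℓ(θ_H)). Suppose φ, ψ, η are differentiable, φ' is strictly decreasing (strictly antitone), and η'(x) > 0 for all x. If x̂_L* satisfies φ'(x̂_L*) = 0 and x_L* satisfies ψ'(x_L*) = 0, then: (i) if ℓ(θ_L) − p ℓ(θ_H) ≥ 0 (i.e., p ≤ p̄ := ℓ(θ_L)/ℓ(θ_H)) then x_L* ≥ x̂_L*; (ii) if ℓ(θ_L) − p ℓ(θ_H) < 0 (i.e., p > p̄) then x_L* < x̂_L*. -/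

import Mathlib

/-- Proposition 2: comparison of the low-type privacy settings with and without loss risk,
depending on the sign of `ℓ(θL) − p ℓ(θH)`. -/
theorem stmt_8 (φ ψ η : ℝ → ℝ) (p ℓL ℓH xLhat xLs : ℝ)
    (hp0 : 0 < p) (hp1 : p < 1)
    (hψ : ∀ x, ψ x = φ x - (1 - η x) * (ℓL - p * ℓH))
    (hφdiff : Differentiable ℝ φ)
    (hηdiff : Differentiable ℝ η)
    (hanti : StrictAnti (fun x => deriv φ x))
    (hη' : ∀ x, 0 < deriv η x)
    (hfocφ : deriv φ xLhat = 0)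
    (hfocψ : deriv ψ xLs = 0) :
    (0 ≤ ℓL - p * ℓH → xLs ≥ xLhat) ∧
    (ℓL - p * ℓH < 0 → xLs < xLhat) := by
  have hψd : deriv ψ xLs = deriv φ xLs + deriv η xLs * (ℓL - p * ℓH) := by
    have h1 : HasDerivAt φ (deriv φ xLs) xLs := (hφdiff xLs).hasDerivAt
    have h2 : HasDerivAt η (deriv η xLs) xLs := (hηdiff xLs).hasDerivAt
    have h3 : HasDerivAt (fun x => φ x - (1 - η x) * (ℓL - p * ℓH))
        (deriv φ xLs + deriv η xLs * (ℓL - p * ℓH)) xLs := by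
      have := h1.sub ((((hasDerivAt_const xLs (1:ℝ)).sub h2).mul_const (ℓL - p * ℓH)))
      refine this.congr_deriv ?_
      ring
    have : HasDerivAt ψ (deriv φ xLs + deriv η xLs * (ℓL - p * ℓH)) xLs := by
      have heq : ψ = fun x => φ x - (1 - η x) * (ℓL - p * ℓH) := funext hψ
      rw [heq]; exact h3
    exact this.deriv
  have key : deriv φ xLs = -(deriv η xLs * (ℓL - p * ℓH)) := by linarith [hfocψ, hψd]
  constructor
  · intro h
    by_contra hlt
    push_neg at hlt
    have := hanti hlt
    simp only [hfocφ] at this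
    have hpos : (0:ℝ) < deriv φ xLs := this
    nlinarith [hη' xLs]
  · intro h
    by_contra hle
    push_neg at hle
    have h2 : deriv φ xLs ≤ deriv φ xLhat := hanti.antitone hle
    rw [hfocφ] at h2
    nlinarith [hη' xLs]
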